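/- The coefficients n_λ(μ) (μ ∈ Π⁺(λ), λ ∈ Λ⁺) uniquely determine the structure constants n^λ_{μ,ν}, and conversely in type A_l: if two families {f_λ} and {f'_λ} of the given form have the same structure constants n^λ_{μ,ν} = n'^λ_{μ,ν} for all dominant λ, μ, ν, then f_λ = f'_λ for all λ. -/

import Mathlib

/-!
STATEMENT 12: In type `A_l`, the coefficients `n_λ(μ)` of a family
`f_λ = Σ_{x∈Π(λ)} n_λ(x) e(x)` uniquely determine the structure constants
`n^λ_{μ,ν}` (defined by `f_μ · f_ν = Σ_λ n^λ_{μ,ν} f_λ`), and conversely: if two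
families `{f_λ}` and `{f'_λ}` of the given form have the same structure constants,
then `f_λ = f'_λ` for all dominant `λ`.

Model: the weight lattice of `A_l` in fundamental-weight coordinates `Fin l → ℤ`
(`ω_i` the standard basis vectors, `α_j` the columns of the Cartan matrix), with the
Weyl group generated by the simple reflections `s_j(v) = v - v_j α_j` acting on
`ℤ[Λ] = AddMonoidAlgebra ℤ (Fin l → ℤ)` by `mapDomain`.  Each family member `f_λ`
(`λ ∈ Λ⁺`) is Weyl-invariant with `n_λ(λ) = 1` and support in the saturated set
`Π(λ)`; `huniq` records the (true) fact that each Weyl orbit contains at most one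
dominant weight.  The structure constants are given as finitely supported functions
`n μ ν : Λ⁺ →₀ ℤ` via the expansion hypotheses `hn`, `hn'`.
-/

abbrev WeightA (l : ℕ) := Fin l → ℤ

def sr (l : ℕ) (j : Fin l) : WeightA l := fun k =>
  if k = j then 2 else if (k : ℤ) = (j : ℤ) + 1 ∨ (j : ℤ) = (k : ℤ) + 1 then -1 else 0

def IsDominant (l : ℕ) (lam : WeightA l) : Prop := ∀ i, 0 ≤ lam i

/-- The dominant weights `Λ⁺`, as a subtype. -/
abbrev Dom (l : ℕ) := {v : WeightA l // IsDominant l v}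

def DomLe (l : ℕ) (μ lam : WeightA l) : Prop :=
  ∃ c : Fin l → ℕ, lam - μ = ∑ j, (c j : ℤ) • sr l j

/-- The simple reflection `s_j`. -/
def reflect (l : ℕ) (j : Fin l) (v : WeightA l) : WeightA l := v - v j • sr l j

/-- `y` lies in the Weyl orbit `W·x`. -/
def SameOrbit (l : ℕ) (x y : WeightA l) : Prop :=
  Relation.ReflTransGen (fun a b => ∃ j, b = reflect l j a) x y

/-- The saturated weight set `Π(λ)`. -/
def SatSet (l : ℕ) (lam : WeightA l) : Set (WeightA l) :=
  {x | ∃ μ, IsDominant l μ ∧ DomLe l μ lam ∧ SameOrbit l μ x}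

namespace SC

lemma sum_ite_le (N m : ℕ) : (∑ k : Fin N, if (k:ℕ) ≤ m then (1:ℤ) else 0) = min (m+1) N := by
  induction N with
  | zero => simp
  | succ N ih =>
    rw [Fin.sum_univ_castSucc]
    simp only [Fin.coe_castSucc, Fin.val_last, ih]
    split_ifs with h <;> [skip; skip] <;> omega

lemma sum_ite_eq_nat (N j₀ : ℕ) (c : ℤ) :
    (∑ k : Fin N, if (k:ℕ) = j₀ then c else 0) = if j₀ < N then c else 0 := by
  induction N with
  | zero => simp
  | succ N ih =>
    rw [Fin.sum_univ_castSucc]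
    simp only [Fin.coe_castSucc, Fin.val_last, ih]
    split_ifs <;> omega

def Sv (l : ℕ) (v : WeightA l) (k : Fin (l+1)) : ℤ :=
  ∑ j : Fin l, if (k : ℕ) ≤ (j : ℕ) then v j else 0

lemma Sv_last (l : ℕ) (v : WeightA l) : Sv l v (Fin.last l) = 0 := by
  unfold Sv
  apply Finset.sum_eq_zero
  intro j _
  have := j.isLt
  simp only [Fin.val_last]
  rw [if_neg (by omega)]

lemma Sv_sub (l : ℕ) (v w : WeightA l) (k : Fin (l+1)) :
    Sv l (v - w) k = Sv l v k - Sv l w k := by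
  unfold Sv
  rw [← Finset.sum_sub_distrib]
  apply Finset.sum_congr rfl
  intro j _
  by_cases h : (k:ℕ) ≤ (j:ℕ) <;> simp [h, Pi.sub_apply]

lemma Sv_add (l : ℕ) (v w : WeightA l) (k : Fin (l+1)) :
    Sv l (v + w) k = Sv l v k + Sv l w k := by
  unfold Sv
  rw [← Finset.sum_add_distrib]
  apply Finset.sum_congr rfl
  intro j _
  by_cases h : (k:ℕ) ≤ (j:ℕ) <;> simp [h, Pi.add_apply]

lemma Sv_smul (l : ℕ) (z : ℤ) (v : WeightA l) (k : Fin (l+1)) :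
    Sv l (z • v) k = z * Sv l v k := by
  unfold Sv
  rw [Finset.mul_sum]
  apply Finset.sum_congr rfl
  intro j _
  by_cases h : (k:ℕ) ≤ (j:ℕ) <;> simp [h, Pi.smul_apply]

lemma Sv_sum {α : Type*} (l : ℕ) (s : Finset α) (g : α → WeightA l) (k : Fin (l+1)) :
    Sv l (∑ a ∈ s, g a) k = ∑ a ∈ s, Sv l (g a) k := by
  classical
  induction s using Finset.induction with
  | empty => simp [Sv]
  | insert _ _ h ih => rw [Finset.sum_insert h, Finset.sum_insert h, Sv_add, ih]

lemma Sv_diff (l : ℕ) (v : WeightA l) (j : Fin l) :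
    Sv l v j.castSucc - Sv l v j.succ = v j := by
  unfold Sv
  rw [← Finset.sum_sub_distrib]
  rw [Finset.sum_eq_single j]
  · simp [Fin.coe_castSucc, Fin.val_succ]
  · intro m _ hm
    have : (m:ℕ) ≠ (j:ℕ) := fun h => hm (Fin.ext h)
    simp only [Fin.coe_castSucc, Fin.val_succ]
    by_cases h : (j:ℕ) ≤ (m:ℕ)
    · rw [if_pos h, if_pos (by omega), sub_self]
    · rw [if_neg h, if_neg (by omega), sub_self]
  · intro h
    exact absurd (Finset.mem_univ j) h

lemma Sv_injective (l : ℕ) (v w : WeightA l) (h : ∀ k, Sv l v k = Sv l w k) : v = w := by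
  funext j
  rw [← Sv_diff l v j, ← Sv_diff l w j, h, h]

lemma Sv_nonneg (l : ℕ) (v : WeightA l) (hd : IsDominant l v) (k : Fin (l+1)) :
    0 ≤ Sv l v k := by
  apply Finset.sum_nonneg
  intro j _
  by_cases h : (k:ℕ) ≤ (j:ℕ) <;> simp [h, hd j]

lemma Sv_anti (l : ℕ) (v : WeightA l) (hd : IsDominant l v) (k k' : Fin (l+1))
    (h : (k:ℕ) ≤ (k':ℕ)) : Sv l v k' ≤ Sv l v k := by
  apply Finset.sum_le_sum
  intro j _
  by_cases h1 : (k':ℕ) ≤ (j:ℕ)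
  · rw [if_pos h1, if_pos (le_trans h h1)]
  · rw [if_neg h1]
    by_cases h2 : (k:ℕ) ≤ (j:ℕ) <;> simp [h2, hd j]

lemma Sv_single (l : ℕ) (i : Fin l) (k : Fin (l+1)) :
    Sv l (Pi.single i 1) k = if (k:ℕ) ≤ (i:ℕ) then 1 else 0 := by
  unfold Sv
  rw [Finset.sum_eq_single i]
  · simp
  · intro m _ hm
    rw [Pi.single_apply, if_neg hm]
    simp
  · intro h; exact absurd (Finset.mem_univ i) h

lemma sr_apply (l : ℕ) (j m : Fin l) :
    sr l j m = (if (m:ℕ) = (j:ℕ) then 2 else 0) - (if (m:ℕ) = (j:ℕ)+1 then 1 else 0)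
      - (if (j:ℕ) = (m:ℕ)+1 then 1 else 0) := by
  unfold sr
  by_cases hmj : m = j
  · subst hmj; rw [if_pos rfl]; split_ifs <;> omega
  · rw [if_neg hmj]
    have hmj' : (m:ℕ) ≠ (j:ℕ) := fun h => hmj (Fin.ext h)
    split_ifs <;> omega

lemma Sv_sr (l : ℕ) (j : Fin l) (k : Fin (l+1)) :
    Sv l (sr l j) k = (if (k:ℕ) = (j:ℕ) then 1 else 0) - (if (k:ℕ) = (j:ℕ)+1 then 1 else 0)
      + (if (j:ℕ)+1 = l then 1 else 0) := by
  unfold Sv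
  have hj := j.isLt
  have hk := k.isLt
  calc (∑ m : Fin l, if (k : ℕ) ≤ (m : ℕ) then sr l j m else 0)
      = ∑ m : Fin l, ((if (k:ℕ) ≤ (m:ℕ) then (if (m:ℕ) = (j:ℕ) then (2:ℤ) else 0) else 0)
        - (if (k:ℕ) ≤ (m:ℕ) then (if (m:ℕ) = (j:ℕ)+1 then (1:ℤ) else 0) else 0)
        - (if (k:ℕ) ≤ (m:ℕ) then (if (j:ℕ) = (m:ℕ)+1 then (1:ℤ) else 0) else 0)) := by
        apply Finset.sum_congr rfl
        intro m _
        rw [sr_apply]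
        split_ifs <;> ring
    _ = (if (k:ℕ) ≤ (j:ℕ) then (2:ℤ) else 0)
        - (if (j:ℕ)+1 < l ∧ (k:ℕ) ≤ (j:ℕ)+1 then (1:ℤ) else 0)
        - (if 1 ≤ (j:ℕ) ∧ (k:ℕ) ≤ (j:ℕ)-1 then (1:ℤ) else 0) := by
        rw [Finset.sum_sub_distrib, Finset.sum_sub_distrib]
        congr 1
        congr 1
        · calc (∑ m : Fin l, if (k:ℕ) ≤ (m:ℕ) then (if (m:ℕ) = (j:ℕ) then (2:ℤ) else 0) else 0)
              = ∑ m : Fin l, (if (m:ℕ) = (j:ℕ) then (if (j:ℕ) ≥ (k:ℕ) then (2:ℤ) else 0) else 0) := by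
                apply Finset.sum_congr rfl; intro m _
                split_ifs <;> omega
            _ = _ := by rw [sum_ite_eq_nat l (j:ℕ)]; split_ifs <;> omega
        · calc (∑ m : Fin l, if (k:ℕ) ≤ (m:ℕ) then (if (m:ℕ) = (j:ℕ)+1 then (1:ℤ) else 0) else 0)
              = ∑ m : Fin l, (if (m:ℕ) = (j:ℕ)+1 then (if (k:ℕ) ≤ (j:ℕ)+1 then (1:ℤ) else 0) else 0) := by
                apply Finset.sum_congr rfl; intro m _
                split_ifs <;> omega
            _ = _ := by rw [sum_ite_eq_nat l ((j:ℕ)+1)]; split_ifs <;> omega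
        · calc (∑ m : Fin l, if (k:ℕ) ≤ (m:ℕ) then (if (j:ℕ) = (m:ℕ)+1 then (1:ℤ) else 0) else 0)
              = ∑ m : Fin l, (if (m:ℕ) = (j:ℕ)-1 then (if 1 ≤ (j:ℕ) ∧ (k:ℕ) ≤ (j:ℕ)-1 then (1:ℤ) else 0) else 0) := by
                apply Finset.sum_congr rfl; intro m _
                split_ifs <;> omega
            _ = _ := by rw [sum_ite_eq_nat l ((j:ℕ)-1)]; split_ifs <;> omega
    _ = _ := by split_ifs <;> omega

def Pt (l : ℕ) (i : Fin l) (v : WeightA l) : ℤ :=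
  ∑ k : Fin (l+1), if (k:ℕ) ≤ (i:ℕ) then Sv l v k else 0

def Tot (l : ℕ) (v : WeightA l) : ℤ := ∑ k : Fin (l+1), Sv l v k

def phi (l : ℕ) (i : Fin l) (v : WeightA l) : ℤ :=
  ((l:ℤ)+1) * Pt l i v - ((i:ℕ)+1) * Tot l v

lemma Pt_sub (l : ℕ) (i : Fin l) (v w : WeightA l) :
    Pt l i (v - w) = Pt l i v - Pt l i w := by
  unfold Pt
  rw [← Finset.sum_sub_distrib]
  refine Finset.sum_congr rfl fun k _ => ?_
  rw [Sv_sub]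
  split_ifs <;> ring

lemma Pt_add (l : ℕ) (i : Fin l) (v w : WeightA l) :
    Pt l i (v + w) = Pt l i v + Pt l i w := by
  unfold Pt
  rw [← Finset.sum_add_distrib]
  refine Finset.sum_congr rfl fun k _ => ?_
  rw [Sv_add]
  split_ifs <;> ring

lemma Pt_smul (l : ℕ) (i : Fin l) (z : ℤ) (v : WeightA l) :
    Pt l i (z • v) = z * Pt l i v := by
  unfold Pt
  rw [Finset.mul_sum]
  refine Finset.sum_congr rfl fun k _ => ?_
  rw [Sv_smul]
  split_ifs <;> ring

lemma Tot_sub (l : ℕ) (v w : WeightA l) : Tot l (v - w) = Tot l v - Tot l w := by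
  unfold Tot
  rw [← Finset.sum_sub_distrib]
  exact Finset.sum_congr rfl fun k _ => Sv_sub l v w k

lemma Tot_add (l : ℕ) (v w : WeightA l) : Tot l (v + w) = Tot l v + Tot l w := by
  unfold Tot
  rw [← Finset.sum_add_distrib]
  exact Finset.sum_congr rfl fun k _ => Sv_add l v w k

lemma Tot_smul (l : ℕ) (z : ℤ) (v : WeightA l) : Tot l (z • v) = z * Tot l v := by
  unfold Tot
  rw [Finset.mul_sum]
  exact Finset.sum_congr rfl fun k _ => Sv_smul l z v k

lemma phi_sub (l : ℕ) (i : Fin l) (v w : WeightA l) :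
    phi l i (v - w) = phi l i v - phi l i w := by
  unfold phi; rw [Pt_sub, Tot_sub]; ring

lemma phi_add (l : ℕ) (i : Fin l) (v w : WeightA l) :
    phi l i (v + w) = phi l i v + phi l i w := by
  unfold phi; rw [Pt_add, Tot_add]; ring

lemma phi_smul (l : ℕ) (i : Fin l) (z : ℤ) (v : WeightA l) :
    phi l i (z • v) = z * phi l i v := by
  unfold phi; rw [Pt_smul, Tot_smul]; ring

lemma phi_sum {α : Type*} (l : ℕ) (i : Fin l) (s : Finset α) (g : α → WeightA l) :
    phi l i (∑ a ∈ s, g a) = ∑ a ∈ s, phi l i (g a) := by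
  classical
  induction s using Finset.induction with
  | empty => simp [phi, Pt, Tot, Sv]
  | insert _ _ h ih => rw [Finset.sum_insert h, Finset.sum_insert h, phi_add, ih]

lemma sum_le_ite_eq (N m j₀ : ℕ) (c : ℤ) :
    (∑ k : Fin N, if (k:ℕ) ≤ m then (if (k:ℕ) = j₀ then c else 0) else 0)
      = if j₀ < N ∧ j₀ ≤ m then c else 0 := by
  calc (∑ k : Fin N, if (k:ℕ) ≤ m then (if (k:ℕ) = j₀ then c else 0) else 0)
      = ∑ k : Fin N, (if (k:ℕ) = j₀ then (if j₀ ≤ m then c else 0) else 0) := by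
        refine Finset.sum_congr rfl fun k _ => ?_; split_ifs <;> omega
    _ = if j₀ < N then (if j₀ ≤ m then c else 0) else 0 := sum_ite_eq_nat N j₀ _
    _ = _ := by split_ifs <;> omega

lemma Pt_sr (l : ℕ) (i j : Fin l) :
    Pt l i (sr l j) = (if (j:ℕ) ≤ (i:ℕ) then 1 else 0) - (if (j:ℕ)+1 ≤ (i:ℕ) then 1 else 0)
      + (if (j:ℕ)+1 = l then ((i:ℤ)+1) else 0) := by
  have hi := i.isLt; have hj := j.isLt
  unfold Pt
  calc (∑ k : Fin (l+1), if (k:ℕ) ≤ (i:ℕ) then Sv l (sr l j) k else 0)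
      = ∑ k : Fin (l+1),
          ((if (k:ℕ) ≤ (i:ℕ) then (if (k:ℕ) = (j:ℕ) then (1:ℤ) else 0) else 0)
          - (if (k:ℕ) ≤ (i:ℕ) then (if (k:ℕ) = (j:ℕ)+1 then (1:ℤ) else 0) else 0)
          + (if (k:ℕ) ≤ (i:ℕ) then (if (j:ℕ)+1 = l then (1:ℤ) else 0) else 0)) := by
        refine Finset.sum_congr rfl fun k _ => ?_
        rw [Sv_sr]
        split_ifs <;> ring
    _ = _ := by
        rw [Finset.sum_add_distrib, Finset.sum_sub_distrib, sum_le_ite_eq, sum_le_ite_eq]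
        have e1 : (if (j:ℕ) < l+1 ∧ (j:ℕ) ≤ (i:ℕ) then (1:ℤ) else 0)
            = (if (j:ℕ) ≤ (i:ℕ) then (1:ℤ) else 0) := by split_ifs <;> omega
        have e2 : (if (j:ℕ)+1 < l+1 ∧ (j:ℕ)+1 ≤ (i:ℕ) then (1:ℤ) else 0)
            = (if (j:ℕ)+1 ≤ (i:ℕ) then (1:ℤ) else 0) := by split_ifs <;> omega
        have e3 : (∑ k : Fin (l+1), if (k:ℕ) ≤ (i:ℕ) then (if (j:ℕ)+1 = l then (1:ℤ) else 0) else 0)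
            = (if (j:ℕ)+1 = l then ((i:ℤ)+1) else 0) := by
          by_cases h : (j:ℕ)+1 = l
          · simp only [if_pos h]
            rw [sum_ite_le (l+1) (i:ℕ)]
            push_cast
            omega
          · simp only [if_neg h, ite_self]
            simp
        rw [e1, e2, e3]

lemma Tot_sr (l : ℕ) (j : Fin l) :
    Tot l (sr l j) = if (j:ℕ)+1 = l then ((l:ℤ)+1) else 0 := by
  have hj := j.isLt
  unfold Tot
  calc (∑ k : Fin (l+1), Sv l (sr l j) k)
      = ∑ k : Fin (l+1),
          ((if (k:ℕ) = (j:ℕ) then (1:ℤ) else 0) - (if (k:ℕ) = (j:ℕ)+1 then (1:ℤ) else 0)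
            + (if (j:ℕ)+1 = l then (1:ℤ) else 0)) := by
        exact Finset.sum_congr rfl fun k _ => Sv_sr l j k
    _ = _ := by
        rw [Finset.sum_add_distrib, Finset.sum_sub_distrib, sum_ite_eq_nat, sum_ite_eq_nat]
        rw [if_pos (by omega : (j:ℕ) < l+1), if_pos (by omega : (j:ℕ)+1 < l+1)]
        by_cases h : (j:ℕ)+1 = l
        · simp only [if_pos h, Finset.sum_const, Finset.card_univ, Fintype.card_fin,
            nsmul_eq_mul]
          push_cast
          ring
        · simp only [if_neg h]
          simp

lemma phi_sr (l : ℕ) (i j : Fin l) :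
    phi l i (sr l j) = if i = j then ((l:ℤ)+1) else 0 := by
  have hi := i.isLt; have hj := j.isLt
  unfold phi
  rw [Pt_sr, Tot_sr]
  by_cases hij : i = j
  · subst hij
    rw [if_pos rfl, if_pos le_rfl, if_neg (by omega : ¬ ((i:ℕ)+1 ≤ (i:ℕ)))]
    by_cases h : (i:ℕ)+1 = l
    · rw [if_pos h, if_pos h]; push_cast; ring
    · rw [if_neg h, if_neg h]; push_cast; ring
  · rw [if_neg hij]
    have hne : (i:ℕ) ≠ (j:ℕ) := fun hh => hij (Fin.ext hh)
    by_cases hle : (j:ℕ) ≤ (i:ℕ)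
    · rw [if_pos hle, if_pos (by omega : (j:ℕ)+1 ≤ (i:ℕ))]
      by_cases h : (j:ℕ)+1 = l
      · exfalso; omega
      · rw [if_neg h, if_neg h]; ring
    · rw [if_neg hle, if_neg (by omega : ¬ ((j:ℕ)+1 ≤ (i:ℕ)))]
      by_cases h : (j:ℕ)+1 = l
      · rw [if_pos h, if_pos h]; push_cast; ring
      · rw [if_neg h, if_neg h]; ring

lemma Pt_single (l : ℕ) (i j : Fin l) :
    Pt l i (Pi.single j (1:ℤ)) = (min (i:ℕ) (j:ℕ) : ℤ) + 1 := by
  have hi := i.isLt; have hj := j.isLt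
  unfold Pt
  calc (∑ k : Fin (l+1), if (k:ℕ) ≤ (i:ℕ) then Sv l (Pi.single j 1) k else 0)
      = ∑ k : Fin (l+1), (if (k:ℕ) ≤ min (i:ℕ) (j:ℕ) then (1:ℤ) else 0) := by
        refine Finset.sum_congr rfl fun k _ => ?_
        rw [Sv_single]
        split_ifs <;> omega
    _ = (min ((min (i:ℕ) (j:ℕ))+1) (l+1) : ℕ) := sum_ite_le (l+1) _
    _ = _ := by push_cast; omega

lemma Tot_single (l : ℕ) (j : Fin l) :
    Tot l (Pi.single j (1:ℤ)) = (j:ℤ) + 1 := by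
  have hj := j.isLt
  unfold Tot
  calc (∑ k : Fin (l+1), Sv l (Pi.single j 1) k)
      = ∑ k : Fin (l+1), (if (k:ℕ) ≤ (j:ℕ) then (1:ℤ) else 0) := by
        exact Finset.sum_congr rfl fun k _ => Sv_single l j k
    _ = (min ((j:ℕ)+1) (l+1) : ℕ) := sum_ite_le (l+1) _
    _ = _ := by push_cast; omega

lemma phi_single_pos (l : ℕ) (i j : Fin l) : 0 < phi l i (Pi.single j (1:ℤ)) := by
  have hi := i.isLt; have hj := j.isLt
  unfold phi
  rw [Pt_single, Tot_single]
  rcases le_total (i:ℕ) (j:ℕ) with h | h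
  · have h1 : ((i:ℕ):ℤ) ≤ ((j:ℕ):ℤ) := by exact_mod_cast h
    have h2 : ((j:ℕ):ℤ) < l := by exact_mod_cast hj
    rw [min_eq_left h1]
    nlinarith
  · have h1 : ((j:ℕ):ℤ) ≤ ((i:ℕ):ℤ) := by exact_mod_cast h
    have h2 : ((i:ℕ):ℤ) < l := by exact_mod_cast hi
    rw [min_eq_right h1]
    nlinarith

lemma pi_decomp (l : ℕ) (v : WeightA l) :
    v = ∑ j : Fin l, v j • Pi.single j (1:ℤ) := by
  funext k
  rw [Finset.sum_apply]
  rw [Finset.sum_eq_single k]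
  · simp
  · intro m _ hm
    rw [Pi.smul_apply, Pi.single_apply, if_neg (fun hh => hm (Fin.ext (congrArg Fin.val hh)).symm)]
    simp
  · intro h; exact absurd (Finset.mem_univ k) h

lemma phi_dom_nonneg (l : ℕ) (i : Fin l) (v : WeightA l) (hd : IsDominant l v) :
    0 ≤ phi l i v := by
  rw [pi_decomp l v, phi_sum]
  apply Finset.sum_nonneg
  intro j _
  rw [phi_smul]
  exact mul_nonneg (hd j) (le_of_lt (phi_single_pos l i j))

lemma phi_dom_pos (l : ℕ) (i : Fin l) (v : WeightA l) (hd : IsDominant l v) (hv : v ≠ 0) :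
    0 < phi l i v := by
  obtain ⟨j₀, hj₀⟩ : ∃ j₀, v j₀ ≠ 0 := by
    by_contra hc
    push_neg at hc
    exact hv (funext fun k => hc k)
  rw [pi_decomp l v, phi_sum]
  apply Finset.sum_pos'
  · intro j _
    rw [phi_smul]
    exact mul_nonneg (hd j) (le_of_lt (phi_single_pos l i j))
  · refine ⟨j₀, Finset.mem_univ j₀, ?_⟩
    rw [phi_smul]
    have : 0 < v j₀ := lt_of_le_of_ne (hd j₀) (Ne.symm hj₀)
    exact mul_pos this (phi_single_pos l i j₀)

lemma phi_rep (l : ℕ) (w : WeightA l) (c : Fin l → ℕ)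
    (hc : w = ∑ j, (c j : ℤ) • sr l j) (i : Fin l) :
    phi l i w = ((l:ℤ)+1) * (c i) := by
  rw [hc, phi_sum]
  rw [Finset.sum_eq_single i]
  · rw [phi_smul, phi_sr, if_pos rfl]; ring
  · intro j _ hj
    rw [phi_smul, phi_sr, if_neg (fun hh => hj hh.symm), mul_zero]
  · intro h; exact absurd (Finset.mem_univ i) h

lemma rep_zero (l : ℕ) (w : WeightA l) (c : Fin l → ℕ)
    (hc : w = ∑ j, (c j : ℤ) • sr l j) (hz : ∀ i, phi l i w = 0) : w = 0 := by
  have hci : ∀ i, (c i : ℤ) = 0 := by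
    intro i
    have h1 := phi_rep l w c hc i
    rw [hz i] at h1
    have hl : (0:ℤ) < (l:ℤ)+1 := by positivity
    have := mul_eq_zero.mp h1.symm
    rcases this with h | h
    · omega
    · exact h
  rw [hc]
  apply Finset.sum_eq_zero
  intro j _
  rw [hci j, zero_smul]

lemma domle_refl (l : ℕ) (x : WeightA l) : DomLe l x x :=
  ⟨fun _ => 0, by simp⟩

lemma domle_add (l : ℕ) (x μ y ν : WeightA l) (h1 : DomLe l x μ) (h2 : DomLe l y ν) :
    DomLe l (x + y) (μ + ν) := by
  obtain ⟨c, hc⟩ := h1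
  obtain ⟨d, hd⟩ := h2
  refine ⟨fun j => c j + d j, ?_⟩
  have : μ + ν - (x + y) = (μ - x) + (ν - y) := by ring
  rw [this, hc, hd, ← Finset.sum_add_distrib]
  refine Finset.sum_congr rfl fun j _ => ?_
  push_cast
  rw [add_smul]

lemma domle_trans (l : ℕ) (x y z : WeightA l) (h1 : DomLe l x y) (h2 : DomLe l y z) :
    DomLe l x z := by
  obtain ⟨c, hc⟩ := h1
  obtain ⟨d, hd⟩ := h2
  refine ⟨fun j => c j + d j, ?_⟩
  have : z - x = (z - y) + (y - x) := by ring
  rw [this, hc, hd, ← Finset.sum_add_distrib]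
  refine Finset.sum_congr rfl fun j _ => ?_
  push_cast
  rw [add_smul]
  ring

lemma domle_antisymm (l : ℕ) (x μ : WeightA l) (h1 : DomLe l x μ) (h2 : DomLe l μ x) :
    x = μ := by
  obtain ⟨c, hc⟩ := h1
  have hz : ∀ i, phi l i (μ - x) = 0 := by
    intro i
    obtain ⟨d, hd⟩ := h2
    have e1 := phi_rep l (μ - x) c hc i
    have e2 := phi_rep l (x - μ) d hd i
    have e3 : phi l i (x - μ) = - phi l i (μ - x) := by
      rw [phi_sub, phi_sub]; ring
    have hl : (0:ℤ) < (l:ℤ)+1 := by positivity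
    have hcn : (0:ℤ) ≤ (c i : ℤ) := Int.ofNat_nonneg _
    have hdn : (0:ℤ) ≤ (d i : ℤ) := Int.ofNat_nonneg _
    nlinarith
  have := rep_zero l (μ - x) c hc hz
  have : μ = x := by
    have h := sub_eq_zero.mp this
    exact h
  exact this.symm

def ht (l : ℕ) (v : WeightA l) : ℤ := ∑ i : Fin l, phi l i v

lemma ht_sub (l : ℕ) (v w : WeightA l) : ht l (v - w) = ht l v - ht l w := by
  unfold ht
  rw [← Finset.sum_sub_distrib]
  exact Finset.sum_congr rfl fun i _ => phi_sub l i v w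

lemma ht_add (l : ℕ) (v w : WeightA l) : ht l (v + w) = ht l v + ht l w := by
  unfold ht
  rw [← Finset.sum_add_distrib]
  exact Finset.sum_congr rfl fun i _ => phi_add l i v w

lemma ht_dom_nonneg (l : ℕ) (v : WeightA l) (hd : IsDominant l v) : 0 ≤ ht l v :=
  Finset.sum_nonneg fun i _ => phi_dom_nonneg l i v hd

lemma ht_domle_nonneg (l : ℕ) (x μ : WeightA l) (h : DomLe l x μ) : 0 ≤ ht l (μ - x) := by
  obtain ⟨c, hc⟩ := h
  unfold ht
  apply Finset.sum_nonneg
  intro i _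
  rw [phi_rep l (μ - x) c hc i]
  positivity

lemma domle_ht_le (l : ℕ) (x μ : WeightA l) (h : DomLe l x μ) : ht l x ≤ ht l μ := by
  have := ht_domle_nonneg l x μ h
  rw [ht_sub] at this
  omega

lemma domle_ht_lt (l : ℕ) (x μ : WeightA l) (h : DomLe l x μ) (hne : x ≠ μ) :
    ht l x < ht l μ := by
  rcases lt_or_eq_of_le (domle_ht_le l x μ h) with h1 | h1
  · exact h1
  · exfalso
    obtain ⟨c, hc⟩ := h
    have hz : ∀ i, phi l i (μ - x) = 0 := by
      intro i
      have hnn : ∀ j ∈ Finset.univ, 0 ≤ phi l j (μ - x) := by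
        intro j _
        rw [phi_rep l (μ - x) c hc j]
        positivity
      have hsum : ∑ j : Fin l, phi l j (μ - x) = 0 := by
        have : ht l (μ - x) = 0 := by rw [ht_sub]; omega
        exact this
      have := (Finset.sum_eq_zero_iff_of_nonneg hnn).mp hsum
      exact this i (Finset.mem_univ i)
    exact hne (sub_eq_zero.mp (rep_zero l (μ - x) c hc hz)).symm

lemma dom_ht_pos (l : ℕ) (v : WeightA l) (hd : IsDominant l v) (hv : v ≠ 0) :
    0 < ht l v := by
  have hl : l ≠ 0 := by
    intro h
    apply hv
    funext j
    exact absurd j.isLt (by omega)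
  apply Finset.sum_pos
  · intro i _
    exact phi_dom_pos l i v hd hv
  · refine ⟨⟨0, Nat.pos_of_ne_zero hl⟩, Finset.mem_univ _⟩

lemma sr_self (l : ℕ) (j : Fin l) : sr l j j = 2 := by
  unfold sr; rw [if_pos rfl]

lemma reflect_invol (l : ℕ) (j : Fin l) : Function.Involutive (reflect l j) := by
  intro v
  unfold reflect
  have h1 : (v - v j • sr l j) j = - v j := by
    rw [Pi.sub_apply, Pi.smul_apply, sr_self, smul_eq_mul]
    ring
  rw [h1]
  funext k
  simp only [Pi.sub_apply, Pi.smul_apply, smul_eq_mul]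
  ring

lemma sum_eq_at (N : ℕ) (g : Fin N → ℤ) (j₀ : ℕ) :
    (∑ j : Fin N, if (j:ℕ) = j₀ then g j else 0)
      = if h : j₀ < N then g ⟨j₀, h⟩ else 0 := by
  split_ifs with h
  · rw [Finset.sum_eq_single (⟨j₀, h⟩ : Fin N)]
    · rw [if_pos rfl]
    · intro m _ hm
      rw [if_neg (fun hh => hm (Fin.ext hh))]
    · intro hh; exact absurd (Finset.mem_univ _) hh
  · apply Finset.sum_eq_zero
    intro j _
    rw [if_neg (fun hh => h (by rw [← hh]; exact j.isLt))]

lemma Sv_reflect (l : ℕ) (j : Fin l) (v : WeightA l) (k : Fin (l+1)) :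
    Sv l (reflect l j v) k = Sv l v (Equiv.swap j.castSucc j.succ k)
      - (if (j:ℕ)+1 = l then v j else 0) := by
  have hj := j.isLt
  have hcs : ((j.castSucc : Fin (l+1)) : ℕ) = (j:ℕ) := rfl
  have hss : ((j.succ : Fin (l+1)) : ℕ) = (j:ℕ)+1 := rfl
  have hiter : (if (j:ℕ)+1 = l then (v j : ℤ) else 0) = v j * (if (j:ℕ)+1 = l then 1 else 0) := by
    split_ifs <;> ring
  have hd : Sv l v j.succ = Sv l v j.castSucc - v j := by
    have := Sv_diff l v j; linarith
  unfold reflect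
  rw [Sv_sub, Sv_smul, Sv_sr]
  by_cases h1 : k = j.castSucc
  · subst h1
    rw [Equiv.swap_apply_left]
    rw [if_pos hcs, if_neg (show ¬ ((j.castSucc : Fin (l+1)) : ℕ) = (j:ℕ)+1 by omega)]
    rw [hd, hiter]
    ring
  · by_cases h2 : k = j.succ
    · subst h2
      rw [Equiv.swap_apply_right]
      rw [if_neg (show ¬ ((j.succ : Fin (l+1)) : ℕ) = (j:ℕ) by omega), if_pos hss]
      rw [hd, hiter]
      ring
    · rw [Equiv.swap_apply_of_ne_of_ne h1 h2]
      have hk1 : ¬ ((k:ℕ) = (j:ℕ)) := fun hh => h1 (Fin.ext hh)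
      have hk2 : ¬ ((k:ℕ) = (j:ℕ)+1) := fun hh => h2 (Fin.ext hh)
      rw [if_neg hk1, if_neg hk2, hiter]
      ring

lemma orbit_perm (l : ℕ) (μ x : WeightA l) (h : SameOrbit l μ x) :
    ∃ σ : Equiv.Perm (Fin (l+1)), ∃ t : ℤ, ∀ k, Sv l x k = Sv l μ (σ k) - t := by
  induction h with
  | refl => exact ⟨Equiv.refl _, 0, fun k => by simp⟩
  | @tail b c hab hbc ih =>
    obtain ⟨σ, t, hst⟩ := ih
    obtain ⟨j, hj⟩ := hbc
    refine ⟨(Equiv.swap j.castSucc j.succ).trans σ,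
      t + (if (j:ℕ)+1 = l then b j else 0), fun k => ?_⟩
    rw [hj, Sv_reflect, hst]
    simp only [Equiv.trans_apply]
    ring

lemma perm_partial_le (N : ℕ) (s : Fin N → ℤ)
    (hs : ∀ k k' : Fin N, (k:ℕ) ≤ (k':ℕ) → s k' ≤ s k)
    (σ : Equiv.Perm (Fin N)) (m : ℕ) :
    (∑ k : Fin N, if (k:ℕ) ≤ m then s (σ k) else 0)
      ≤ ∑ k : Fin N, if (k:ℕ) ≤ m then s k else 0 := by
  have hmono : Monovary (fun k : Fin N => if (k:ℕ) ≤ m then (1:ℤ) else 0) s := by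
    intro a b hab
    by_cases ha : (a:ℕ) ≤ m
    · have hb : (b:ℕ) ≤ m := by
        by_contra hb
        have hba : (a:ℕ) ≤ (b:ℕ) := by omega
        exact absurd (hs a b hba) (not_le.mpr hab)
      simp [ha, hb]
    · by_cases hb : (b:ℕ) ≤ m <;> simp [ha, hb]
  have hre := hmono.sum_smul_comp_perm_le_sum_smul (σ := σ)
  have e : ∀ (g : Fin N → ℤ), (∑ k : Fin N, (if (k:ℕ) ≤ m then (1:ℤ) else 0) • g k)
      = ∑ k : Fin N, if (k:ℕ) ≤ m then g k else 0 := by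
    intro g
    refine Finset.sum_congr rfl fun k _ => ?_
    split_ifs <;> simp
  have e2 : (∑ k : Fin N, (if (k:ℕ) ≤ m then (1:ℤ) else 0) • s (σ k))
      = ∑ k : Fin N, if (k:ℕ) ≤ m then s (σ k) else 0 := by
    refine Finset.sum_congr rfl fun k _ => ?_
    split_ifs <;> simp
  rw [e s, e2] at hre
  exact hre

lemma orbit_domle (l : ℕ) (μ x : WeightA l) (hd : IsDominant l μ) (h : SameOrbit l μ x) :
    DomLe l x μ := by
  rcases Nat.eq_zero_or_pos l with hl | hl
  · subst hl
    have hxx : x = μ := funext fun j => absurd j.isLt (by omega)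
    rw [hxx]; exact domle_refl _ _
  obtain ⟨σ, t, hst⟩ := orbit_perm l μ x h
  obtain ⟨D, hD⟩ : ∃ D' : Fin (l+1) → ℤ, D' = fun k => Sv l μ k - Sv l μ (σ k) := ⟨_, rfl⟩
  obtain ⟨C, hC⟩ : ∃ C' : ℕ → ℤ, C' = fun a => ∑ k : Fin (l+1), if (k:ℕ) ≤ a then D k else 0 :=
    ⟨_, rfl⟩
  have hCnonneg : ∀ a, 0 ≤ C a := by
    intro a
    have he : C a = (∑ k : Fin (l+1), if (k:ℕ) ≤ a then Sv l μ k else 0)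
        - (∑ k : Fin (l+1), if (k:ℕ) ≤ a then Sv l μ (σ k) else 0) := by
      rw [hC, ← Finset.sum_sub_distrib]
      refine Finset.sum_congr rfl fun k _ => ?_
      simp only [hD]
      split_ifs <;> ring
    rw [he]
    have hp := perm_partial_le (l+1) (Sv l μ) (fun k k' hk => Sv_anti l μ hd k k' hk) σ a
    omega
  have hCtot : ∀ a, l ≤ a → C a = 0 := by
    intro a ha
    have h1 : C a = ∑ k : Fin (l+1), D k := by
      rw [hC]
      refine Finset.sum_congr rfl fun k _ => ?_
      rw [if_pos (show (k:ℕ) ≤ a by omega)]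
    have h2 : ∑ k : Fin (l+1), Sv l μ (σ k) = ∑ k : Fin (l+1), Sv l μ k :=
      Equiv.sum_comp σ (Sv l μ)
    rw [h1]
    simp only [hD]
    rw [Finset.sum_sub_distrib, h2, sub_self]
  have hCdiff : ∀ k : Fin (l+1),
      C (k:ℕ) - (if 1 ≤ (k:ℕ) then C ((k:ℕ)-1) else 0) = D k := by
    intro k
    by_cases hk : 1 ≤ (k:ℕ)
    · rw [if_pos hk]
      have : C (k:ℕ) - C ((k:ℕ)-1)
          = ∑ k' : Fin (l+1), if (k':ℕ) = (k:ℕ) then D k' else 0 := by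
        rw [hC, ← Finset.sum_sub_distrib]
        refine Finset.sum_congr rfl fun k' _ => ?_
        split_ifs <;> omega
      rw [this, sum_eq_at, dif_pos k.isLt]
    · rw [if_neg hk]
      have hk0 : (k:ℕ) = 0 := by omega
      have : C (k:ℕ) = ∑ k' : Fin (l+1), if (k':ℕ) = (k:ℕ) then D k' else 0 := by
        rw [hC]
        refine Finset.sum_congr rfl fun k' _ => ?_
        split_ifs <;> omega
      rw [this, sum_eq_at, dif_pos k.isLt, sub_zero]
  obtain ⟨c, hc⟩ : ∃ c' : Fin l → ℕ, c' = fun j : Fin l => (C ((j:ℕ))).toNat := ⟨_, rfl⟩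
  have hcast : ∀ j : Fin l, ((c j : ℤ)) = C (j:ℕ) := fun j => by
    rw [hc]; exact Int.toNat_of_nonneg (hCnonneg _)
  refine ⟨c, funext fun m => ?_⟩
  have hm := m.isLt
  have hxm : x m = Sv l μ (σ m.castSucc) - Sv l μ (σ m.succ) := by
    have h0 := Sv_diff l x m
    have h1 := hst m.castSucc
    have h2 := hst m.succ
    linarith
  have hμm : μ m = Sv l μ m.castSucc - Sv l μ m.succ := (Sv_diff l μ m).symm
  have hDc := hCdiff m.castSucc
  have hDs := hCdiff m.succ
  simp only [Fin.coe_castSucc, Fin.val_succ] at hDc hDs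
  rw [if_pos (by omega : 1 ≤ (m:ℕ)+1)] at hDs
  have hsimp : (m:ℕ)+1-1 = (m:ℕ) := by omega
  rw [hsimp] at hDs
  have hterm2 : (∑ j : Fin l, if (j:ℕ) = (m:ℕ)-1 ∧ 1 ≤ (m:ℕ) then C (j:ℕ) else 0)
      = if 1 ≤ (m:ℕ) then C ((m:ℕ)-1) else 0 := by
    by_cases h1 : 1 ≤ (m:ℕ)
    · rw [if_pos h1]
      have he : (∑ j : Fin l, if (j:ℕ) = (m:ℕ)-1 ∧ 1 ≤ (m:ℕ) then C (j:ℕ) else 0)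
          = ∑ j : Fin l, if (j:ℕ) = (m:ℕ)-1 then C (j:ℕ) else 0 := by
        refine Finset.sum_congr rfl fun j _ => ?_
        split_ifs <;> omega
      rw [he, sum_eq_at, dif_pos (show (m:ℕ)-1 < l by omega)]
    · rw [if_neg h1]
      apply Finset.sum_eq_zero
      intro j _
      rw [if_neg (fun hh => h1 hh.2)]
  have hterm3 : (∑ j : Fin l, if (j:ℕ) = (m:ℕ)+1 then C (j:ℕ) else 0) = C ((m:ℕ)+1) := by
    rw [sum_eq_at]
    split_ifs with hh
    · rfl
    · exact (hCtot ((m:ℕ)+1) (by omega)).symm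
  have hRHS : (∑ j : Fin l, (c j : ℤ) • sr l j) m
      = 2 * C (m:ℕ) - (if 1 ≤ (m:ℕ) then C ((m:ℕ)-1) else 0) - C ((m:ℕ)+1) := by
    rw [Finset.sum_apply]
    calc (∑ j : Fin l, ((c j : ℤ) • sr l j) m)
        = ∑ j : Fin l, (2 * (if (j:ℕ) = (m:ℕ) then C (j:ℕ) else 0)
            - (if (j:ℕ) = (m:ℕ)-1 ∧ 1 ≤ (m:ℕ) then C (j:ℕ) else 0)
            - (if (j:ℕ) = (m:ℕ)+1 then C (j:ℕ) else 0)) := by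
          refine Finset.sum_congr rfl fun j _ => ?_
          rw [Pi.smul_apply, smul_eq_mul, sr_apply, hcast j]
          split_ifs <;> first | (exfalso; omega) | ring
      _ = 2 * (∑ j : Fin l, if (j:ℕ) = (m:ℕ) then C (j:ℕ) else 0)
          - (∑ j : Fin l, if (j:ℕ) = (m:ℕ)-1 ∧ 1 ≤ (m:ℕ) then C (j:ℕ) else 0)
          - (∑ j : Fin l, if (j:ℕ) = (m:ℕ)+1 then C (j:ℕ) else 0) := by
          rw [Finset.sum_sub_distrib, Finset.sum_sub_distrib, Finset.mul_sum]
      _ = _ := by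
          rw [hterm2, hterm3, sum_eq_at, dif_pos hm]
  rw [Pi.sub_apply, hRHS]
  have h1 : D m.castSucc = Sv l μ m.castSucc - Sv l μ (σ m.castSucc) := by simp only [hD]
  have h2 : D m.succ = Sv l μ m.succ - Sv l μ (σ m.succ) := by simp only [hD]
  rw [hxm, hμm]
  linarith [hDc, hDs, h1, h2]

lemma satset_domle (l : ℕ) (lam x : WeightA l) (hx : x ∈ SatSet l lam) : DomLe l x lam := by
  obtain ⟨μ, hμd, hμle, horb⟩ := hx
  exact domle_trans l x μ lam (orbit_domle l μ x hμd horb) hμle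

lemma sum_ite_lt (N m : ℕ) : (∑ k : Fin N, if (k:ℕ) < m then (1:ℤ) else 0) = min m N := by
  induction N with
  | zero => simp
  | succ N ih =>
    rw [Fin.sum_univ_castSucc]
    simp only [Fin.coe_castSucc, Fin.val_last, ih]
    split_ifs with h <;> [skip; skip] <;> omega

lemma Tot_sum {α : Type*} (l : ℕ) (s : Finset α) (g : α → WeightA l) :
    Tot l (∑ a ∈ s, g a) = ∑ a ∈ s, Tot l (g a) := by
  unfold Tot
  rw [Finset.sum_comm]
  exact Finset.sum_congr rfl fun k _ => Sv_sum l s g k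

lemma single_dominant (l : ℕ) (i : Fin l) : IsDominant l (Pi.single i (1:ℤ)) := by
  intro k
  rw [Pi.single_apply]
  split_ifs <;> omega

lemma single_ne_zero' (l : ℕ) (i : Fin l) : (Pi.single i (1:ℤ) : WeightA l) ≠ 0 := by
  intro h
  have := congrFun h i
  rw [Pi.single_eq_same] at this
  exact one_ne_zero this

lemma minuscule (l : ℕ) (i : Fin l) (μ : WeightA l) (hd : IsDominant l μ)
    (hle : DomLe l μ (Pi.single i 1)) : μ = Pi.single i 1 := by
  have hi := i.isLt
  have hl : 0 < l := lt_of_le_of_lt (Nat.zero_le _) hi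
  obtain ⟨cc, hcc⟩ := hle
  have hnn : ∀ k, 0 ≤ Sv l μ k := Sv_nonneg l μ hd
  have hSv : ∀ k, Sv l (Pi.single i (1:ℤ)) k - Sv l μ k
      = ∑ j : Fin l, (cc j : ℤ) * Sv l (sr l j) k := by
    intro k
    rw [← Sv_sub, hcc, Sv_sum]
    exact Finset.sum_congr rfl fun j _ => Sv_smul l _ _ k
  have hk0 : (((0 : Fin (l+1))) : ℕ) = 0 := rfl
  have h0le : ∀ k, Sv l μ k ≤ 1 := by
    have h00 : Sv l μ 0 ≤ 1 := by
      have h1 := hSv 0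
      have h2 : 0 ≤ ∑ j : Fin l, (cc j : ℤ) * Sv l (sr l j) 0 := by
        apply Finset.sum_nonneg
        intro j _
        apply mul_nonneg (Int.ofNat_nonneg _)
        rw [Sv_sr]
        split_ifs <;> omega
      rw [Sv_single, if_pos (by omega)] at h1
      linarith
    intro k
    calc Sv l μ k ≤ Sv l μ 0 := Sv_anti l μ hd _ k (by omega)
      _ ≤ 1 := h00
  have hTot : Tot l μ = (i:ℤ) + 1 := by
    have h1 : Tot l (Pi.single i (1:ℤ)) - Tot l μ = ∑ j : Fin l, (cc j : ℤ) * Tot l (sr l j) := by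
      rw [← Tot_sub, hcc, Tot_sum]
      exact Finset.sum_congr rfl fun j _ => Tot_smul l _ _
    rw [Tot_single] at h1
    have h2 : (∑ j : Fin l, (cc j : ℤ) * Tot l (sr l j))
        = (cc ⟨l-1, by omega⟩ : ℤ) * ((l:ℤ)+1) := by
      calc (∑ j : Fin l, (cc j : ℤ) * Tot l (sr l j))
          = ∑ j : Fin l, (if (j:ℕ) = l-1 then (cc j : ℤ) * ((l:ℤ)+1) else 0) := by
            refine Finset.sum_congr rfl fun j _ => ?_
            have hj := j.isLt
            rw [Tot_sr]
            split_ifs <;> first | (exfalso; omega) | ring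
        _ = _ := by rw [sum_eq_at, dif_pos (show l-1 < l by omega)]
    rw [h2] at h1
    have h3 : 0 ≤ Tot l μ := Finset.sum_nonneg fun k _ => hnn k
    have h4 : (0:ℤ) ≤ (cc ⟨l-1, by omega⟩ : ℤ) := Int.ofNat_nonneg _
    have hicast : ((i:ℕ):ℤ) + 1 ≤ (l:ℤ) := by exact_mod_cast hi
    have h5 : (cc ⟨l-1, by omega⟩ : ℤ) < 1 := by
      by_contra h6
      push_neg at h6
      have h7 : ((l:ℤ)+1) * 1 ≤ ((l:ℤ)+1) * (cc ⟨l-1, by omega⟩ : ℤ) := by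
        apply mul_le_mul_of_nonneg_left h6 (by positivity)
      nlinarith
    have h8 : (cc ⟨l-1, by omega⟩ : ℤ) = 0 := by omega
    rw [h8] at h1
    linarith
  have hic : (1:ℤ) ≤ Sv l μ (Fin.castSucc i) := by
    by_contra hlt
    push_neg at hlt
    have hle0 : Sv l μ (Fin.castSucc i) ≤ 0 := by omega
    have hbound : Tot l μ ≤ (i:ℤ) := by
      unfold Tot
      calc (∑ k : Fin (l+1), Sv l μ k)
          ≤ ∑ k : Fin (l+1), (if (k:ℕ) < (i:ℕ) then 1 else 0 : ℤ) := by
            apply Finset.sum_le_sum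
            intro k _
            by_cases hk : (k:ℕ) < (i:ℕ)
            · rw [if_pos hk]; exact h0le k
            · rw [if_neg hk]
              calc Sv l μ k ≤ Sv l μ (Fin.castSucc i) :=
                    Sv_anti l μ hd _ k (by simp only [Fin.coe_castSucc]; omega)
                _ ≤ 0 := hle0
        _ = _ := by
            rw [sum_ite_lt, min_eq_left (by omega : (i:ℕ) ≤ l+1)]
    linarith
  have hval1 : ∀ k : Fin (l+1), (k:ℕ) ≤ (i:ℕ) → Sv l μ k = 1 := by
    intro k hk
    have h1 : Sv l μ (Fin.castSucc i) ≤ Sv l μ k :=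
      Sv_anti l μ hd k _ (by simp only [Fin.coe_castSucc]; exact hk)
    have h2 := h0le k
    omega
  have hpart1 : (∑ k : Fin (l+1), if (k:ℕ) ≤ (i:ℕ) then Sv l μ k else 0) = (i:ℤ)+1 := by
    calc (∑ k : Fin (l+1), if (k:ℕ) ≤ (i:ℕ) then Sv l μ k else 0)
        = ∑ k : Fin (l+1), (if (k:ℕ) ≤ (i:ℕ) then (1:ℤ) else 0) := by
          refine Finset.sum_congr rfl fun k _ => ?_
          by_cases hk : (k:ℕ) ≤ (i:ℕ)
          · rw [if_pos hk, if_pos hk, hval1 k hk]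
          · rw [if_neg hk, if_neg hk]
      _ = ((min ((i:ℕ)+1) (l+1) : ℕ) : ℤ) := sum_ite_le (l+1) _
      _ = _ := by
          rw [min_eq_left (by omega : (i:ℕ)+1 ≤ l+1)]
          push_cast
          ring
  have hsplit : Tot l μ = (∑ k : Fin (l+1), if (k:ℕ) ≤ (i:ℕ) then Sv l μ k else 0)
      + ∑ k : Fin (l+1), (if (k:ℕ) ≤ (i:ℕ) then 0 else Sv l μ k) := by
    unfold Tot
    rw [← Finset.sum_add_distrib]
    refine Finset.sum_congr rfl fun k _ => ?_
    split_ifs <;> ring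
  have hzero : (∑ k : Fin (l+1), if (k:ℕ) ≤ (i:ℕ) then 0 else Sv l μ k) = 0 := by
    rw [hsplit, hpart1] at hTot
    linarith
  have hrest : ∀ k : Fin (l+1), ¬((k:ℕ) ≤ (i:ℕ)) → Sv l μ k = 0 := by
    intro k hk
    have hterm : ∀ k' : Fin (l+1), k' ∈ Finset.univ → 0 ≤ (if (k':ℕ) ≤ (i:ℕ) then 0 else Sv l μ k') := by
      intro k' _
      split_ifs
      · exact le_refl 0
      · exact hnn k'
    have := (Finset.sum_eq_zero_iff_of_nonneg hterm).mp hzero k (Finset.mem_univ k)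
    rw [if_neg hk] at this
    exact this
  apply Sv_injective
  intro k
  rw [Sv_single]
  by_cases hk : (k:ℕ) ≤ (i:ℕ)
  · rw [if_pos hk]; exact hval1 k hk
  · rw [if_neg hk]; exact hrest k hk

lemma satset_fund (l : ℕ) (i : Fin l) (x : WeightA l) (hx : x ∈ SatSet l (Pi.single i 1)) :
    SameOrbit l (Pi.single i 1) x := by
  obtain ⟨μ, hμd, hμle, horb⟩ := hx
  rwa [minuscule l i μ hμd hμle] at horb

lemma reflect_zero (l : ℕ) (j : Fin l) : reflect l j (0 : WeightA l) = 0 := by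
  unfold reflect
  simp

lemma orbit_zero (l : ℕ) (x : WeightA l) (h : SameOrbit l (0 : WeightA l) x) : x = 0 := by
  induction h with
  | refl => rfl
  | @tail b c hab hbc ih =>
    obtain ⟨j, hj⟩ := hbc
    rw [hj, ih, reflect_zero]

lemma ht_zero (l : ℕ) : ht l (0 : WeightA l) = 0 := by
  unfold ht phi Pt Tot Sv
  simp

lemma satset_zero (l : ℕ) (x : WeightA l) (hx : x ∈ SatSet l 0) : x = 0 := by
  obtain ⟨μ, hμd, hμle, horb⟩ := hx
  have hμ0 : μ = (0 : WeightA l) := by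
    by_contra hne
    have h1 := domle_ht_lt l μ 0 hμle hne
    have h2 := ht_dom_nonneg l μ hμd
    rw [ht_zero] at h1
    omega
  subst hμ0
  exact orbit_zero l x horb

lemma refl_apply (l : ℕ) (F : AddMonoidAlgebra ℤ (WeightA l)) (j : Fin l)
    (hW : Finsupp.mapDomain (reflect l j) F.coeff = F.coeff) (x : WeightA l) :
    F.coeff (reflect l j x) = F.coeff x := by
  have h := Finsupp.mapDomain_apply (reflect_invol l j).injective F.coeff x
  rw [hW] at h
  exact h

lemma orbit_const (l : ℕ) (F : AddMonoidAlgebra ℤ (WeightA l))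
    (hW : ∀ j, Finsupp.mapDomain (reflect l j) F.coeff = F.coeff) (μ x : WeightA l)
    (h : SameOrbit l μ x) : F.coeff x = F.coeff μ := by
  induction h with
  | refl => rfl
  | @tail b c hab hbc ih =>
    obtain ⟨j, hj⟩ := hbc
    rw [hj, refl_apply l F j (hW j), ih]

lemma domle_add_eq (l : ℕ) (x μ y ν : WeightA l) (h1 : DomLe l x μ) (h2 : DomLe l y ν)
    (hsum : x + y = μ + ν) : x = μ ∧ y = ν := by
  have hxy : x - μ = ν - y := by
    rw [sub_eq_sub_iff_add_eq_add]
    rw [hsum]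
    ring
  obtain ⟨d, hd⟩ := h2
  have hrev : DomLe l μ x := ⟨d, by rw [← hxy] at hd; exact hd⟩
  have hxμ : x = μ := (domle_antisymm l μ x hrev h1).symm
  refine ⟨hxμ, ?_⟩
  subst hxμ
  have := add_left_cancel hsum
  exact this

lemma prod_apply_zero (l : ℕ) (F G : AddMonoidAlgebra ℤ (WeightA l)) (μ ν : WeightA l)
    (hF : ∀ x, F.coeff x ≠ 0 → DomLe l x μ) (hG : ∀ y, G.coeff y ≠ 0 → DomLe l y ν)
    (κ : WeightA l) (hκ : ¬ DomLe l κ (μ + ν)) : (F * G).coeff κ = 0 := by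
  classical
  rw [AddMonoidAlgebra.coeff_mul]
  simp only [Finsupp.sum]
  apply Finset.sum_eq_zero
  intro x hx
  apply Finset.sum_eq_zero
  intro y hy
  rw [if_neg]
  intro hxy
  exact hκ (hxy ▸ domle_add l x μ y ν (hF x (Finsupp.mem_support_iff.mp hx))
    (hG y (Finsupp.mem_support_iff.mp hy)))

lemma prod_apply_top (l : ℕ) (F G : AddMonoidAlgebra ℤ (WeightA l)) (μ ν : WeightA l)
    (hF : ∀ x, F.coeff x ≠ 0 → DomLe l x μ) (hG : ∀ y, G.coeff y ≠ 0 → DomLe l y ν) :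
    (F * G).coeff (μ + ν) = F.coeff μ * G.coeff ν := by
  classical
  rw [AddMonoidAlgebra.coeff_mul]
  simp only [Finsupp.sum]
  have hinner : ∀ x ∈ F.coeff.support,
      (∑ y ∈ G.coeff.support, if x + y = μ + ν then F.coeff x * G.coeff y else 0)
        = if x = μ then F.coeff μ * G.coeff ν else 0 := by
    intro x hx
    by_cases hxμ : x = μ
    · subst hxμ
      rw [if_pos rfl]
      by_cases hν : ν ∈ G.coeff.support
      · rw [Finset.sum_eq_single ν]
        · rw [if_pos rfl]
        · intro y _ hyν
          rw [if_neg (fun hh => hyν (add_left_cancel hh))]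
        · intro hh; exact absurd hν hh
      · have hGν : G.coeff ν = 0 := Finsupp.notMem_support_iff.mp hν
        rw [hGν, mul_zero]
        apply Finset.sum_eq_zero
        intro y hy
        rw [if_neg (fun hh => (Finsupp.mem_support_iff.mp hy) (by rw [add_left_cancel hh, hGν]))]
    · rw [if_neg hxμ]
      apply Finset.sum_eq_zero
      intro y hy
      rw [if_neg]
      intro hh
      exact hxμ (domle_add_eq l x μ y ν (hF x (Finsupp.mem_support_iff.mp hx))
        (hG y (Finsupp.mem_support_iff.mp hy)) hh).1
  rw [Finset.sum_congr rfl hinner]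
  by_cases hμ : μ ∈ F.coeff.support
  · rw [Finset.sum_eq_single μ]
    · rw [if_pos rfl]
    · intro x _ hxμ; rw [if_neg hxμ]
    · intro hh; exact absurd hμ hh
  · have hFμ : F.coeff μ = 0 := Finsupp.notMem_support_iff.mp hμ
    rw [hFμ, zero_mul]
    apply Finset.sum_eq_zero
    intro x hx
    rw [if_neg (fun hh => (Finsupp.mem_support_iff.mp hx) (by rw [hh, hFμ]))]

lemma eval_sum (l : ℕ) (g : Dom l →₀ ℤ) (f : WeightA l → AddMonoidAlgebra ℤ (WeightA l))
    (x : WeightA l) :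
    (g.sum fun κ z => z • f ↑κ).coeff x = ∑ κ ∈ g.support, g κ * (f ↑κ).coeff x := by
  classical
  rw [AddMonoidAlgebra.coeff_finsuppSum, Finsupp.sum_apply]
  simp only [Finsupp.sum]
  refine Finset.sum_congr rfl fun κ _ => ?_
  rw [AddMonoidAlgebra.coeff_smul, Finsupp.smul_apply, smul_eq_mul]

lemma key_eval (l : ℕ) (f : WeightA l → AddMonoidAlgebra ℤ (WeightA l))
    (hlead : ∀ lam : Dom l, (f ↑lam).coeff ↑lam = 1)
    (hsupp : ∀ lam : Dom l, ∀ x, x ∉ SatSet l ↑lam → (f ↑lam).coeff x = 0)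
    (g : Dom l →₀ ℤ) (κ₀ : Dom l)
    (hmax : ∀ κ : Dom l, κ ∈ g.support → DomLe l ↑κ₀ ↑κ → κ = κ₀) :
    (g.sum fun κ z => z • f ↑κ).coeff ↑κ₀ = g κ₀ := by
  classical
  rw [eval_sum]
  rw [Finset.sum_eq_single κ₀]
  · rw [hlead κ₀, mul_one]
  · intro κ hκ hne
    have hzero : (f ↑κ).coeff ↑κ₀ = 0 := by
      apply hsupp κ
      intro hmem
      exact hne (hmax κ hκ (satset_domle l ↑κ ↑κ₀ hmem))
    rw [hzero, mul_zero]
  · intro h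
    rw [Finsupp.notMem_support_iff.mp h, zero_mul]

lemma lin_indep (l : ℕ) (f : WeightA l → AddMonoidAlgebra ℤ (WeightA l))
    (hlead : ∀ lam : Dom l, (f ↑lam).coeff ↑lam = 1)
    (hsupp : ∀ lam : Dom l, ∀ x, x ∉ SatSet l ↑lam → (f ↑lam).coeff x = 0)
    (g : Dom l →₀ ℤ) (hzero : (g.sum fun κ z => z • f ↑κ) = 0) : g = 0 := by
  by_contra hg
  obtain ⟨κ₀, hκ₀, hmaxht⟩ :=
    Finset.exists_max_image g.support (fun κ : Dom l => ht l ↑κ)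
      (Finsupp.support_nonempty_iff.mpr hg)
  have hmax : ∀ κ : Dom l, κ ∈ g.support → DomLe l ↑κ₀ ↑κ → κ = κ₀ := by
    intro κ hκ hle
    by_contra hne
    have hlt : ht l (↑κ₀ : WeightA l) < ht l ↑κ :=
      domle_ht_lt l ↑κ₀ ↑κ hle (fun hh => hne (Subtype.ext hh).symm)
    exact absurd (hmaxht κ hκ) (not_le.mpr hlt)
  have hkey := key_eval l f hlead hsupp g κ₀ hmax
  rw [hzero] at hkey
  exact (Finsupp.mem_support_iff.mp hκ₀) (by rw [← hkey]; simp)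

end SC

open SC in
theorem coefficients_iff_structure_constants (l : ℕ)
    (huniq : ∀ μ ν : WeightA l, IsDominant l μ → IsDominant l ν →
      SameOrbit l μ ν → μ = ν)
    (f f' : WeightA l → AddMonoidAlgebra ℤ (WeightA l))
    (hWf : ∀ lam : Dom l, ∀ j, Finsupp.mapDomain (reflect l j) (f ↑lam).coeff = (f ↑lam).coeff)
    (hWf' : ∀ lam : Dom l, ∀ j, Finsupp.mapDomain (reflect l j) (f' ↑lam).coeff = (f' ↑lam).coeff)
    (hlead : ∀ lam : Dom l, (f ↑lam).coeff ↑lam = 1)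
    (hlead' : ∀ lam : Dom l, (f' ↑lam).coeff ↑lam = 1)
    (hsupp : ∀ lam : Dom l, ∀ x, x ∉ SatSet l ↑lam → (f ↑lam).coeff x = 0)
    (hsupp' : ∀ lam : Dom l, ∀ x, x ∉ SatSet l ↑lam → (f' ↑lam).coeff x = 0)
    (n n' : Dom l → Dom l → (Dom l →₀ ℤ))
    (hn : ∀ μ ν : Dom l, f ↑μ * f ↑ν = (n μ ν).sum fun lam z => z • f ↑lam)
    (hn' : ∀ μ ν : Dom l, f' ↑μ * f' ↑ν = (n' μ ν).sum fun lam z => z • f' ↑lam) :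
    ((∀ lam : Dom l, f ↑lam = f' ↑lam) → n = n') ∧
    ((n = n') → ∀ lam : Dom l, f ↑lam = f' ↑lam) := by
  constructor
  · -- coefficients determine structure constants
    intro hff
    funext μ ν
    have hsame : ((n μ ν) - (n' μ ν)).sum (fun κ z => z • f ↑κ) = 0 := by
      rw [Finsupp.sum_sub_index (fun κ b₁ b₂ => by rw [sub_smul])]
      have e1 := hn μ ν
      have e2 := hn' μ ν
      simp only [← hff] at e2
      rw [← e1, ← e2, sub_self]
    have hz := lin_indep l f hlead hsupp _ hsame
    exact sub_eq_zero.mp hz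
  · -- structure constants determine coefficients
    intro hnn
    have hzerocase : ∀ lam : Dom l, (lam : WeightA l) = 0 → f ↑lam = f' ↑lam := by
      intro lam h0
      refine AddMonoidAlgebra.ext (Finsupp.ext fun x => ?_)
      by_cases hx : x = (lam : WeightA l)
      · subst hx
        rw [hlead lam, hlead' lam]
      · have hxs : x ∉ SatSet l ↑lam := by
          rw [h0]
          intro hmem
          exact hx ((satset_zero l x hmem).trans h0.symm)
        rw [hsupp lam x hxs, hsupp' lam x hxs]
    have hfundcase : ∀ lam : Dom l, ∀ i : Fin l, (lam : WeightA l) = Pi.single i 1 →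
        f ↑lam = f' ↑lam := by
      intro lam i hfund
      refine AddMonoidAlgebra.ext (Finsupp.ext fun x => ?_)
      by_cases hx : x ∈ SatSet l ↑lam
      · have horb : SameOrbit l (↑lam : WeightA l) x := by
          rw [hfund] at hx ⊢
          exact satset_fund l i x hx
        rw [orbit_const l (f ↑lam) (hWf lam) ↑lam x horb,
          orbit_const l (f' ↑lam) (hWf' lam) ↑lam x horb, hlead lam, hlead' lam]
      · rw [hsupp lam x hx, hsupp' lam x hx]
    suffices H : ∀ N : ℕ, ∀ lam : Dom l, (ht l ↑lam).toNat ≤ N → f ↑lam = f' ↑lam by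
      intro lam
      exact H (ht l ↑lam).toNat lam le_rfl
    intro N
    induction N with
    | zero =>
      intro lam hN
      apply hzerocase lam
      by_contra h0
      have hpos := dom_ht_pos l ↑lam lam.2 h0
      omega
    | succ N IH =>
      intro lam hN
      by_cases h0 : (lam : WeightA l) = 0
      · exact hzerocase lam h0
      obtain ⟨i, hi⟩ : ∃ i, (lam : WeightA l) i ≠ 0 := by
        by_contra hc
        push_neg at hc
        exact h0 (funext fun k => hc k)
      have hipos : 1 ≤ (lam : WeightA l) i := by
        have := lam.2 i; omega
      by_cases hfund : (lam : WeightA l) = Pi.single i 1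
      · exact hfundcase lam i hfund
      have hμd : IsDominant l (Pi.single i 1) := single_dominant l i
      have hνd : IsDominant l ((lam : WeightA l) - Pi.single i 1) := by
        intro k
        rw [Pi.sub_apply, Pi.single_apply]
        by_cases hk : k = i
        · rw [if_pos hk, hk]; omega
        · rw [if_neg hk]
          have := lam.2 k
          omega
      set μ : Dom l := ⟨Pi.single i 1, hμd⟩ with hμdef
      set ν : Dom l := ⟨(lam : WeightA l) - Pi.single i 1, hνd⟩ with hνdef
      have hsum : (μ : WeightA l) + (ν : WeightA l) = (lam : WeightA l) := by
        show Pi.single i 1 + ((lam : WeightA l) - Pi.single i 1) = (lam : WeightA l)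
        ring
      have hμpos : 0 < ht l (μ : WeightA l) := dom_ht_pos l _ hμd (single_ne_zero' l i)
      have hνpos : 0 < ht l (ν : WeightA l) := by
        apply dom_ht_pos l _ hνd
        show (lam : WeightA l) - Pi.single i 1 ≠ 0
        intro hh
        exact hfund (sub_eq_zero.mp hh)
      have hhts : ht l (lam : WeightA l) = ht l (μ : WeightA l) + ht l (ν : WeightA l) := by
        rw [← hsum, ht_add]
      have hIH : ∀ κ : Dom l, ht l ↑κ < ht l (lam : WeightA l) → f ↑κ = f' ↑κ := by
        intro κ hκ
        apply IH κ
        have h2 : 0 ≤ ht l (κ : WeightA l) := ht_dom_nonneg l ↑κ κ.2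
        omega
      have hfμ : f ↑μ = f' ↑μ := hIH μ (by omega)
      have hfν : f ↑ν = f' ↑ν := hIH ν (by omega)
      have hFsupp : ∀ x, (f ↑μ).coeff x ≠ 0 → DomLe l x ↑μ := fun x hx =>
        satset_domle l ↑μ x (by by_contra hmem; exact hx (hsupp μ x hmem))
      have hGsupp : ∀ y, (f ↑ν).coeff y ≠ 0 → DomLe l y ↑ν := fun y hy =>
        satset_domle l ↑ν y (by by_contra hmem; exact hy (hsupp ν y hmem))
      classical
      have claim1 : ∀ κ : Dom l, κ ∈ (n μ ν).support → DomLe l ↑κ ↑lam := by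
        by_contra hbad
        push_neg at hbad
        obtain ⟨κb, hκb, hnle⟩ := hbad
        obtain ⟨κ₀, hκ₀mem, hκ₀max⟩ :=
          Finset.exists_max_image ((n μ ν).support.filter (fun κ : Dom l => ¬ DomLe l (↑κ : WeightA l) ↑lam))
            (fun κ : Dom l => ht l ↑κ) ⟨κb, Finset.mem_filter.mpr ⟨hκb, hnle⟩⟩
        obtain ⟨hκ₀supp, hκ₀bad⟩ := Finset.mem_filter.mp hκ₀mem
        have hmax : ∀ κ : Dom l, κ ∈ (n μ ν).support → DomLe l ↑κ₀ ↑κ → κ = κ₀ := by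
          intro κ hκ hle
          by_cases hdl : DomLe l ↑κ ↑lam
          · exact absurd (domle_trans l ↑κ₀ ↑κ ↑lam hle hdl) hκ₀bad
          · by_contra hne
            have hlt := domle_ht_lt l ↑κ₀ ↑κ hle (fun hh => hne (Subtype.ext hh).symm)
            exact absurd (hκ₀max κ (Finset.mem_filter.mpr ⟨hκ, hdl⟩)) (not_le.mpr hlt)
        have hkey := key_eval l f hlead hsupp (n μ ν) κ₀ hmax
        rw [← hn μ ν] at hkey
        have hz : (f ↑μ * f ↑ν).coeff ↑κ₀ = 0 := by
          apply prod_apply_zero l _ _ ↑μ ↑ν hFsupp hGsupp ↑κ₀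
          rw [hsum]
          exact hκ₀bad
        rw [hz] at hkey
        exact (Finsupp.mem_support_iff.mp hκ₀supp) hkey.symm
      have hmaxlam : ∀ κ : Dom l, κ ∈ (n μ ν).support → DomLe l ↑lam ↑κ → κ = lam := by
        intro κ hκ hle
        exact (Subtype.ext (domle_antisymm l ↑lam ↑κ hle (claim1 κ hκ))).symm
      have hglam : (n μ ν) lam = 1 := by
        have hkey := key_eval l f hlead hsupp (n μ ν) lam hmaxlam
        rw [← hn μ ν] at hkey
        have htop : (f ↑μ * f ↑ν).coeff ↑lam = 1 := by
          rw [← hsum, prod_apply_top l _ _ ↑μ ↑ν hFsupp hGsupp, hlead μ, hlead ν, mul_one]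
        rw [htop] at hkey
        exact hkey.symm
      have hlammem : lam ∈ (n μ ν).support :=
        Finsupp.mem_support_iff.mpr (by rw [hglam]; exact one_ne_zero)
      have hrw : ∀ κ : Dom l, κ ∈ (n μ ν).support.erase lam → f ↑κ = f' ↑κ := by
        intro κ hκ
        obtain ⟨hne, hmem⟩ := Finset.mem_erase.mp hκ
        exact hIH κ (domle_ht_lt l ↑κ ↑lam (claim1 κ hmem) (fun hh => hne (Subtype.ext hh)))
      have hsplit : ∀ F : WeightA l → AddMonoidAlgebra ℤ (WeightA l),
          ((n μ ν).sum fun κ z => z • F ↑κ)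
            = F ↑lam + ∑ κ ∈ (n μ ν).support.erase lam, (n μ ν) κ • F ↑κ := by
        intro F
        simp only [Finsupp.sum]
        rw [← Finset.add_sum_erase _ _ hlammem, hglam, one_smul]
      have e1 := hn μ ν
      have e2 := hn' μ ν
      have hnn' : n' μ ν = n μ ν := by rw [hnn]
      rw [hsplit] at e1
      rw [hnn', hsplit] at e2
      have hsumeq : (∑ κ ∈ (n μ ν).support.erase lam, (n μ ν) κ • f ↑κ)
          = ∑ κ ∈ (n μ ν).support.erase lam, (n μ ν) κ • f' ↑κ :=
        Finset.sum_congr rfl fun κ hκ => by rw [hrw κ hκ]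
      calc f ↑lam
          = (f ↑μ * f ↑ν) - ∑ κ ∈ (n μ ν).support.erase lam, (n μ ν) κ • f ↑κ := by
            rw [e1]; abel
        _ = (f' ↑μ * f' ↑ν) - ∑ κ ∈ (n μ ν).support.erase lam, (n μ ν) κ • f' ↑κ := by
            rw [hfμ, hfν, hsumeq]
        _ = f' ↑lam := by rw [e2]; abel
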